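/- Let v ∈ ℝ^d and let S_1, ..., S_{d+k-1} be subsets of ℝ^d such that for every K ⊆ [d+k-1] of size k, v lies in the convex cone generated by the union of the sets S_i, i ∈ K. Then there exists a rainbow set S with v ∈ cone(S). -/

import Mathlib

open Finset Topology

/-- `v` lies in the convex cone generated by `S`: it is a nonnegative linear
combination of finitely many points of `S`. -/
def InCone {E : Type*} [AddCommMonoid E] [Module ℝ E] (S : Set E) (v : E) : Prop :=
  ∃ (m : ℕ) (c : Fin m → ℝ) (x : Fin m → E),
    (∀ j, 0 ≤ c j) ∧ (∀ j, x j ∈ S) ∧ ∑ j, c j • x j = v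


/-- Conic reduction to a linearly independent support. -/
lemma cone_reduce {E : Type*} [AddCommGroup E] [Module ℝ E] {ι : Type*}
    (x : ι → E) (s : Finset ι) :
    ∀ (c : ι → ℝ), (∀ i, 0 ≤ c i) →
    ∃ (t : Finset ι) (c' : ι → ℝ), t ⊆ s ∧ (∀ i, 0 ≤ c' i) ∧
      (LinearIndependent ℝ (fun i : ↥t => x i)) ∧
      ∑ i ∈ t, c' i • x i = ∑ i ∈ s, c i • x i := by
  classical
  induction s using Finset.strongInduction with
  | _ s ih =>
    intro c hc
    by_cases hli : LinearIndependent ℝ (fun i : ↥s => x i)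
    · exact ⟨s, c, subset_rfl, hc, hli, rfl⟩
    · obtain ⟨g, hgsum, j0, hgj0⟩ := Fintype.not_linearIndependent_iff.mp hli
      set lam : ι → ℝ := fun i => if h : i ∈ s then g ⟨i, h⟩ else 0 with hlam
      have hlamsum : ∑ i ∈ s, lam i • x i = 0 := by
        rw [← Finset.sum_coe_sort s (fun i => lam i • x i)]
        rw [← hgsum]
        apply Finset.sum_congr rfl
        intro i _
        simp [hlam, i.2]
      have hlam0 : ∀ i ∉ s, lam i = 0 := fun i hi => dif_neg hi
      obtain ⟨μ, hμ0, hμsum, i1, hi1s, hi1⟩ :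
          ∃ μ : ι → ℝ, (∀ i ∉ s, μ i = 0) ∧ (∑ i ∈ s, μ i • x i = 0) ∧
            ∃ i1 ∈ s, 0 < μ i1 := by
        rcases lt_or_gt_of_ne hgj0 with h | h
        · refine ⟨-lam, fun i hi => by simp [hlam0 i hi], ?_, j0.1, j0.2, ?_⟩
          · simp only [Pi.neg_apply, neg_smul, Finset.sum_neg_distrib, hlamsum, neg_zero]
          · simp only [Pi.neg_apply, hlam, dif_pos j0.2]
            simpa using h
        · refine ⟨lam, hlam0, hlamsum, j0.1, j0.2, ?_⟩
          simpa [hlam, dif_pos j0.2] using h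
      set P := s.filter (fun i => 0 < μ i) with hP
      obtain ⟨i0, hi0P, hi0min⟩ := P.exists_min_image (fun i => c i / μ i)
        ⟨i1, Finset.mem_filter.mpr ⟨hi1s, hi1⟩⟩
      have hi0s : i0 ∈ s := (Finset.mem_filter.mp hi0P).1
      have hμi0 : 0 < μ i0 := (Finset.mem_filter.mp hi0P).2
      set r := c i0 / μ i0 with hr
      have hr0 : 0 ≤ r := div_nonneg (hc i0) hμi0.le
      set c'' : ι → ℝ := fun i => c i - r * μ i with hc''
      have hc''0 : ∀ i, 0 ≤ c'' i := by
        intro i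
        by_cases his : i ∈ s
        · by_cases hpos : 0 < μ i
          · have hmin := hi0min i (Finset.mem_filter.mpr ⟨his, hpos⟩)
            have : r * μ i ≤ (c i / μ i) * μ i := by nlinarith
            rw [div_mul_cancel₀ _ hpos.ne'] at this
            simp only [hc'']
            linarith
          · have h1 : μ i ≤ 0 := not_lt.mp hpos
            have h2 : r * μ i ≤ 0 := mul_nonpos_of_nonneg_of_nonpos hr0 h1
            simp only [hc'']
            linarith [hc i]
        · simp [hc'', hμ0 i his, hc i]
      have hc''i0 : c'' i0 = 0 := by
        simp only [hc'', hr]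
        rw [div_mul_cancel₀ _ hμi0.ne']
        ring
      have hsum'' : ∑ i ∈ s, c'' i • x i = ∑ i ∈ s, c i • x i := by
        simp only [hc'', sub_smul, mul_smul, Finset.sum_sub_distrib, ← Finset.smul_sum,
          hμsum, smul_zero, sub_zero]
      obtain ⟨t, c', hts, h1, h2, h3⟩ := ih (s.erase i0) (Finset.erase_ssubset hi0s) c'' hc''0
      refine ⟨t, c', hts.trans (Finset.erase_subset _ _), h1, h2, ?_⟩
      rw [h3, ← hsum'']
      exact Finset.sum_erase _ (by rw [hc''i0, zero_smul])

/-- The cone generated by finitely many points is closed. -/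
lemma coneSet_isClosed {E : Type*} [NormedAddCommGroup E] [NormedSpace ℝ E]
    [FiniteDimensional ℝ E] {n : ℕ} (p : Fin n → E) :
    IsClosed {w : E | ∃ c : Fin n → ℝ, (∀ i, 0 ≤ c i) ∧ ∑ i, c i • p i = w} := by
  classical
  have huniv : ∀ t : Finset (Fin n), (Finset.univ : Finset {i // i ∈ t}) = t.attach :=
    fun t => Finset.ext fun i => by simp [Finset.mem_attach]
  have hrw : {w : E | ∃ c : Fin n → ℝ, (∀ i, 0 ≤ c i) ∧ ∑ i, c i • p i = w}
      = ⋃ (t : Finset (Fin n)) (_ : LinearIndependent ℝ (fun i : {i // i ∈ t} => p i.1)),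
        {w : E | ∃ c : {i // i ∈ t} → ℝ, (∀ i, 0 ≤ c i) ∧ ∑ i ∈ t.attach, c i • p i.1 = w} := by
    ext w
    simp only [Set.mem_setOf_eq, Set.mem_iUnion]
    constructor
    · rintro ⟨c, hc, rfl⟩
      obtain ⟨t, c', _, h1, h2, h3⟩ := cone_reduce p Finset.univ c hc
      refine ⟨t, h2, fun i => c' i.1, fun i => h1 i.1, ?_⟩
      rw [Finset.sum_attach t (fun i => c' i • p i)]
      exact h3
    · rintro ⟨t, ht, c, hc, rfl⟩
      refine ⟨fun i => if h : i ∈ t then c ⟨i, h⟩ else 0, fun i => ?_, ?_⟩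
      · dsimp only
        split
        · exact hc _
        · exact le_refl 0
      · have e1 : ∑ i : Fin n, (if h : i ∈ t then c ⟨i, h⟩ else 0) • p i
            = ∑ i ∈ t, (if h : i ∈ t then c ⟨i, h⟩ else 0) • p i :=
          (Finset.sum_subset (Finset.subset_univ t)
            (fun i _ hi => by rw [dif_neg hi, zero_smul])).symm
        rw [e1, ← Finset.sum_attach t (fun i => (if h : i ∈ t then c ⟨i, h⟩ else 0) • p i)]
        apply Finset.sum_congr rfl
        intro i _
        rw [dif_pos i.2]
  rw [hrw]
  apply isClosed_iUnion_of_finite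
  intro t
  apply isClosed_iUnion_of_finite
  intro ht
  set L : ({i // i ∈ t} → ℝ) →ₗ[ℝ] E :=
    { toFun := fun c => ∑ i ∈ t.attach, c i • p i.1
      map_add' := fun a b => by
        simp [add_smul, Finset.sum_add_distrib]
      map_smul' := fun r a => by
        simp [mul_smul, Finset.smul_sum] } with hL
  have hker : LinearMap.ker L = ⊥ := by
    rw [LinearMap.ker_eq_bot']
    intro c hc0
    have hc0' : ∑ i, c i • p i.1 = 0 := by
      rw [huniv t]
      exact hc0
    exact funext (Fintype.linearIndependent_iff.mp ht c hc0')
  have hLc : IsClosedEmbedding L := LinearMap.isClosedEmbedding_of_injective hker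
  have himg : {w : E | ∃ c : {i // i ∈ t} → ℝ, (∀ i, 0 ≤ c i) ∧ ∑ i ∈ t.attach, c i • p i.1 = w}
      = L '' {c | ∀ i, 0 ≤ c i} := by
    ext w
    simp only [Set.mem_setOf_eq, Set.mem_image, hL, LinearMap.coe_mk, AddHom.coe_mk]
  rw [himg]
  apply hLc.isClosedMap
  have : {c : {i // i ∈ t} → ℝ | ∀ i, 0 ≤ c i} = ⋂ i, {c | 0 ≤ c i} := by
    ext c; simp [Set.mem_iInter]
  rw [this]
  exact isClosed_iInter fun i => isClosed_le continuous_const (continuous_apply i)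

open scoped RealInnerProductSpace

set_option maxHeartbeats 1000000 in
lemma main_cone {d k n : ℕ} (hk : 1 ≤ k) (hn : n = d + k - 1) {E : Type*}
    [NormedAddCommGroup E] [InnerProductSpace ℝ E] [FiniteDimensional ℝ E]
    (hdim : Module.finrank ℝ E = d) (v : E) (S : Fin n → Set E)
    (hK : ∀ K : Finset (Fin n), K.card = k → InCone (⋃ i ∈ K, S i) v) :
    ∃ (m : ℕ) (g : Fin m ↪ Fin n) (x : Fin m → E),
      (∀ j, x j ∈ S (g j)) ∧ InCone (Set.range x) v := by
  classical
  -- Step 1: finite witness sets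
  have hKd : ∀ K : {K : Finset (Fin n) // K.card = k}, InCone (⋃ i ∈ K.1, S i) v :=
    fun K => hK K.1 K.2
  choose wm wc wx hwc hwx hwsum using hKd
  have hwx' : ∀ (K : {K : Finset (Fin n) // K.card = k}) (j : Fin (wm K)),
      ∃ i, i ∈ K.1 ∧ wx K j ∈ S i := by
    intro K j
    have := hwx K j
    simpa using this
  choose col hcol1 hcol2 using hwx'
  set T : Fin n → Finset E := fun i =>
    Finset.univ.biUnion (fun K : {K : Finset (Fin n) // K.card = k} =>
      (Finset.univ.filter (fun j => col K j = i)).image (wx K)) with hT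
  have hTS : ∀ i, ∀ p ∈ T i, p ∈ S i := by
    intro i p hp
    simp only [hT, Finset.mem_biUnion, Finset.mem_image, Finset.mem_filter, Finset.mem_univ,
      true_and] at hp
    obtain ⟨K, j, hji, rfl⟩ := hp
    rw [← hji]
    exact hcol2 K j
  have hwxT : ∀ (K : {K : Finset (Fin n) // K.card = k}) (j), wx K j ∈ T (col K j) := by
    intro K j
    simp only [hT, Finset.mem_biUnion, Finset.mem_image, Finset.mem_filter, Finset.mem_univ,
      true_and]
    exact ⟨K, j, rfl, rfl⟩
  clear_value T
  clear hT
  -- Step 2: partial rainbow selections and their cones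
  set pts : (∀ i : Fin n, Option {p // p ∈ T i}) → Fin n → E :=
    fun σ i => (σ i).elim 0 Subtype.val with hpts
  set C : (∀ i : Fin n, Option {p // p ∈ T i}) → Set E :=
    fun σ => {w | ∃ c : Fin n → ℝ, (∀ i, 0 ≤ c i) ∧ ∑ i, c i • pts σ i = w} with hC
  have hC0 : ∀ σ, (0 : E) ∈ C σ := fun σ => ⟨fun _ => 0, fun _ => le_refl 0, by simp⟩
  have hCclosed : ∀ σ, IsClosed (C σ) := fun σ => coneSet_isClosed (pts σ)
  have hCconv : ∀ σ, Convex ℝ (C σ) := by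
    intro σ w1 h1 w2 h2 a b ha hb _
    obtain ⟨c1, hc1, hs1⟩ := h1
    obtain ⟨c2, hc2, hs2⟩ := h2
    refine ⟨fun i => a * c1 i + b * c2 i,
      fun i => add_nonneg (mul_nonneg ha (hc1 i)) (mul_nonneg hb (hc2 i)), ?_⟩
    simp only [add_smul, mul_smul, Finset.sum_add_distrib, ← Finset.smul_sum, hs1, hs2]
  have hgen : ∀ σ i, pts σ i ∈ C σ := by
    intro σ i
    refine ⟨fun j => if j = i then 1 else 0, fun j => by dsimp only; split <;> norm_num, ?_⟩
    simp [ite_smul]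
  -- Step 3: minimize distance over selections
  set D : (∀ i : Fin n, Option {p // p ∈ T i}) → ℝ := fun σ => Metric.infDist v (C σ) with hD
  obtain ⟨σ0, -, hσ0⟩ := Finset.exists_min_image Finset.univ D ⟨fun _ => none, Finset.mem_univ _⟩
  obtain ⟨w, hwC, hwdist⟩ := (hCclosed σ0).exists_infDist_eq_dist ⟨0, hC0 σ0⟩ v
  have hproj : ∀ z ∈ C σ0, ⟪v - w, z - w⟫ ≤ 0 := by
    have h1 : ‖v - w‖ = ⨅ y : C σ0, ‖v - (y : E)‖ := by
      rw [← dist_eq_norm, ← hwdist, Metric.infDist_eq_iInf]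
      simp_rw [dist_eq_norm]
    exact (norm_eq_iInf_iff_real_inner_le_zero (hCconv σ0) hwC).mp h1
  by_cases hu : v - w = 0
  · -- success case: v = w ∈ C σ0
    have hvC : v ∈ C σ0 := by
      rw [sub_eq_zero] at hu
      rwa [hu]
    obtain ⟨c, hc, hcsum⟩ := hvC
    set Dom := Finset.univ.filter (fun i : Fin n => (σ0 i).isSome) with hDom
    have hsum2 : ∑ i ∈ Dom, c i • pts σ0 i = v := by
      rw [← hcsum]
      apply Finset.sum_subset (Finset.subset_univ Dom)
      intro i _ hi
      have hnone : σ0 i = none := by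
        simp only [hDom, Finset.mem_filter, Finset.mem_univ, true_and] at hi
        exact Option.not_isSome_iff_eq_none.mp hi
      simp [hpts, hnone]
    refine ⟨Dom.card, (Dom.orderEmbOfFin rfl).toEmbedding,
      fun j => pts σ0 (Dom.orderEmbOfFin rfl j), ?_, ?_⟩
    · intro j
      have hmem : Dom.orderEmbOfFin rfl j ∈ Dom := Dom.orderEmbOfFin_mem rfl j
      have hs : (σ0 (Dom.orderEmbOfFin rfl j)).isSome := by
        simp only [hDom, Finset.mem_filter, Finset.mem_univ, true_and] at hmem
        exact hmem
      obtain ⟨p, hp⟩ := Option.isSome_iff_exists.mp hs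
      have hpe : pts σ0 (Dom.orderEmbOfFin rfl j) = p.1 := by simp [hpts, hp]
      show pts σ0 (Dom.orderEmbOfFin rfl j) ∈ S (Dom.orderEmbOfFin rfl j)
      rw [hpe]
      exact hTS _ _ p.2
    · refine ⟨Dom.card, fun j => c (Dom.orderEmbOfFin rfl j),
        fun j => pts σ0 (Dom.orderEmbOfFin rfl j),
        fun j => hc _, fun j => ⟨j, rfl⟩, ?_⟩
      rw [← hsum2]
      exact Finset.sum_bij (fun (j : Fin Dom.card) _ => Dom.orderEmbOfFin rfl j)
        (fun j _ => Dom.orderEmbOfFin_mem rfl j)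
        (fun a _ b _ h => (Dom.orderEmbOfFin rfl).injective h)
        (fun b hb => by
          have hrange : b ∈ Set.range (Dom.orderEmbOfFin rfl) := by
            rw [Finset.range_orderEmbOfFin]
            exact hb
          obtain ⟨a, ha⟩ := hrange
          exact ⟨a, Finset.mem_univ a, ha⟩)
        (fun j _ => rfl)
  · -- exchange argument: contradiction
    exfalso
    set u := v - w with hudef
    have hu0 : u ≠ 0 := hu
    have huw : ⟪u, w⟫ = 0 := by
      have hw2 : (2 : ℝ) • w ∈ C σ0 := by
        obtain ⟨c, hc, hcsum⟩ := hwC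
        exact ⟨fun i => 2 * c i, fun i => mul_nonneg (by norm_num) (hc i), by
          simp only [mul_smul, ← Finset.smul_sum, hcsum]⟩
      have h2 := hproj _ hw2
      have h0 := hproj _ (hC0 σ0)
      have e1 : (2 : ℝ) • w - w = w := by
        rw [two_smul]; abel
      rw [e1] at h2
      rw [zero_sub, inner_neg_right] at h0
      linarith
    have hup : ∀ i, ⟪u, pts σ0 i⟫ ≤ 0 := by
      intro i
      have h := hproj _ (hgen σ0 i)
      rwa [inner_sub_right, huw, sub_zero] at h
    obtain ⟨c, hc, hcsum⟩ := hwC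
    obtain ⟨t, c', hts, hc', hli, hsum'⟩ := cone_reduce (pts σ0) Finset.univ c hc
    have hw' : ∑ i ∈ t, c' i • pts σ0 i = w := hsum'.trans hcsum
    set tp := t.filter (fun i => c' i ≠ 0) with htp
    have htpt : tp ⊆ t := Finset.filter_subset _ _
    have hwtp : ∑ i ∈ tp, c' i • pts σ0 i = w := by
      rw [← hw']
      exact Finset.sum_filter_of_ne (fun i _ hne h0 => hne (by rw [h0, zero_smul]))
    have hinner0 : ∀ i ∈ tp, ⟪u, pts σ0 i⟫ = 0 := by
      have hsum0 : ∑ i ∈ tp, c' i * ⟪u, pts σ0 i⟫ = 0 := by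
        have e : ⟪u, ∑ i ∈ tp, c' i • pts σ0 i⟫ = (0 : ℝ) := by rw [hwtp, huw]
        rw [inner_sum] at e
        simpa [real_inner_smul_right] using e
      intro i hi
      have hterm := (Finset.sum_eq_zero_iff_of_nonpos (fun i _ =>
        mul_nonpos_iff.mpr (Or.inl ⟨hc' i, hup i⟩))).mp hsum0 i hi
      have hcne := (Finset.mem_filter.mp hi).2
      rcases mul_eq_zero.mp hterm with h | h
      · exact absurd h hcne
      · exact h
    -- dimension bound on the support
    set f : E →ₗ[ℝ] ℝ :=
      { toFun := fun z => ⟪u, z⟫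
        map_add' := fun a b => inner_add_right _ _ _
        map_smul' := fun r a => by simp [real_inner_smul_right] } with hf
    have hfsurj : Function.Surjective f := by
      intro r
      have huu : ⟪u, u⟫ ≠ 0 := by
        rw [real_inner_self_eq_norm_sq]
        exact pow_ne_zero 2 (norm_ne_zero_iff.mpr hu0)
      refine ⟨(r / ⟪u, u⟫) • u, ?_⟩
      simp only [hf, LinearMap.coe_mk, AddHom.coe_mk, real_inner_smul_right]
      field_simp
    have hrank : 1 + Module.finrank ℝ (LinearMap.ker f) = d := by
      have h1 := LinearMap.finrank_range_add_finrank_ker f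
      rw [LinearMap.range_eq_top.mpr hfsurj, finrank_top, Module.finrank_self, hdim] at h1
      exact h1
    have hcard : tp.card + 1 ≤ d := by
      have hinj : Function.Injective
          (fun i : {i // i ∈ tp} => (⟨i.1, htpt i.2⟩ : {i // i ∈ t})) := by
        intro a b hab
        simp only [Subtype.mk.injEq] at hab
        exact Subtype.ext hab
      have hli2 : LinearIndependent ℝ (fun i : {i // i ∈ tp} => pts σ0 i.1) :=
        hli.comp _ hinj
      have hmemker : ∀ i : {i // i ∈ tp}, pts σ0 i.1 ∈ LinearMap.ker f := by
        intro i
        rw [LinearMap.mem_ker]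
        simpa [hf] using hinner0 i.1 i.2
      have hqli : LinearIndependent ℝ (fun i : {i // i ∈ tp} =>
          (⟨pts σ0 i.1, hmemker i⟩ : LinearMap.ker f)) := by
        apply LinearIndependent.of_comp (LinearMap.ker f).subtype
        have heq : ((LinearMap.ker f).subtype ∘ fun i : {i // i ∈ tp} =>
            (⟨pts σ0 i.1, hmemker i⟩ : LinearMap.ker f)) = fun i : {i // i ∈ tp} =>
            pts σ0 i.1 := rfl
        rw [heq]
        exact hli2
      have hcard1 := hqli.fintype_card_le_finrank
      have hcard2 : Fintype.card {i // i ∈ tp} = tp.card := Fintype.card_coe tp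
      omega
    -- pick k fresh colors
    have hcompl : k ≤ (Finset.univ \ tp).card := by
      rw [Finset.card_sdiff, Finset.inter_univ, Finset.card_univ, Fintype.card_fin]
      omega
    obtain ⟨K, hKsub, hKcard⟩ := Finset.exists_subset_card_eq hcompl
    have hvinner : 0 < ⟪u, v⟫ := by
      have hveq : v = u + w := by rw [hudef]; abel
      rw [hveq, inner_add_right, huw, add_zero, real_inner_self_eq_norm_sq]
      exact pow_pos (norm_pos_iff.mpr hu0) 2
    obtain ⟨j, hj⟩ : ∃ j, 0 < wc ⟨K, hKcard⟩ j * ⟪u, wx ⟨K, hKcard⟩ j⟫ := by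
      by_contra hcon
      push_neg at hcon
      have hle : ∑ j, wc ⟨K, hKcard⟩ j * ⟪u, wx ⟨K, hKcard⟩ j⟫ ≤ 0 :=
        Finset.sum_nonpos (fun j _ => hcon j)
      have he : ∑ j, wc ⟨K, hKcard⟩ j * ⟪u, wx ⟨K, hKcard⟩ j⟫ = ⟪u, v⟫ := by
        rw [← hwsum ⟨K, hKcard⟩, inner_sum]
        simp [real_inner_smul_right]
      rw [he] at hle
      linarith
    set y := wx ⟨K, hKcard⟩ j with hy
    have hyinner : 0 < ⟪u, y⟫ := by
      rcases mul_pos_iff.mp hj with ⟨_, h⟩ | ⟨h1, _⟩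
      · exact h
      · exact absurd h1 (not_lt.mpr (hwc _ j))
    set istar := col ⟨K, hKcard⟩ j with histar
    have hiK : istar ∈ K := hcol1 _ j
    have hitp : istar ∉ tp := by
      intro h
      have hmem := hKsub hiK
      rw [Finset.mem_sdiff] at hmem
      exact hmem.2 h
    have hyT : y ∈ T istar := hwxT _ j
    set σ1 : ∀ i : Fin n, Option {p // p ∈ T i} := fun i =>
      if i ∈ tp then σ0 i else if h2 : i = istar then some ⟨y, by rw [h2]; exact hyT⟩
        else none with hσ1
    have hq_tp : ∀ i ∈ tp, pts σ1 i = pts σ0 i := by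
      intro i hi
      simp [hσ1, hpts, if_pos hi]
    have hq_star : pts σ1 istar = y := by
      simp [hσ1, hpts, hitp]
    set s0 : ℝ := ⟪u, y⟫ / ⟪y, y⟫ with hs0
    have hy0 : y ≠ 0 := by
      intro h
      rw [h, inner_zero_right] at hyinner
      exact lt_irrefl 0 hyinner
    have hyy : 0 < ⟪y, y⟫ := by
      rw [real_inner_self_eq_norm_sq]
      exact pow_pos (norm_pos_iff.mpr hy0) 2
    have hs0pos : 0 < s0 := div_pos hyinner hyy
    have hmem : w + s0 • y ∈ C σ1 := by
      refine ⟨fun i => (if i ∈ tp then c' i else 0) + (if i = istar then s0 else 0), ?_, ?_⟩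
      · intro i
        dsimp only
        apply add_nonneg
        · split
          · exact hc' _
          · exact le_refl 0
        · split
          · exact hs0pos.le
          · exact le_refl 0
      · simp only [add_smul, Finset.sum_add_distrib, ite_smul, zero_smul]
        have e1 : ∑ i : Fin n, (if i ∈ tp then c' i • pts σ1 i else 0) = w := by
          rw [Finset.sum_ite_mem, Finset.univ_inter, ← hwtp]
          exact Finset.sum_congr rfl (fun i hi => by rw [hq_tp i hi])
        have e2 : ∑ i : Fin n, (if i = istar then s0 • pts σ1 i else 0) = s0 • y := by
          rw [Finset.sum_ite_eq' Finset.univ istar]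
          simp [hq_star]
        rw [e1, e2]
    have hlt : dist v (w + s0 • y) < dist v w := by
      have hx1 : v - (w + s0 • y) = u - s0 • y := by rw [hudef]; abel
      have hx2 : v - w = u := hudef.symm
      rw [dist_eq_norm, dist_eq_norm, hx1, hx2]
      have e1 : ⟪u, s0 • y⟫ = s0 * ⟪u, y⟫ := real_inner_smul_right _ _ _
      have e2 : ‖s0 • y‖ ^ 2 = s0 ^ 2 * ⟪y, y⟫ := by
        rw [norm_smul, mul_pow, Real.norm_eq_abs, sq_abs, ← real_inner_self_eq_norm_sq]
      have e4 : s0 ^ 2 * ⟪y, y⟫ = s0 * ⟪u, y⟫ := by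
        rw [pow_two, mul_assoc, hs0]
        rw [div_mul_cancel₀ _ hyy.ne']
      have h2 : ‖u - s0 • y‖ ^ 2 < ‖u‖ ^ 2 := by
        rw [norm_sub_sq_real, e1, e2, e4]
        have hpos : 0 < s0 * ⟪u, y⟫ := mul_pos hs0pos hyinner
        linarith
      exact lt_of_pow_lt_pow_left₀ 2 (norm_nonneg u) h2
    have hD1 : D σ1 ≤ dist v (w + s0 • y) := Metric.infDist_le_dist_of_mem hmem
    have hmin := hσ0 σ1 (Finset.mem_univ _)
    have hD0 : D σ0 = dist v w := hwdist
    rw [hD0] at hmin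
    linarith

lemma InCone.map_linear {E F : Type*} [AddCommMonoid E] [Module ℝ E] [AddCommMonoid F]
    [Module ℝ F] (L : E →ₗ[ℝ] F) {S : Set E} {v : E} (h : InCone S v) :
    InCone (L '' S) (L v) := by
  obtain ⟨m, c, x, hc, hx, hsum⟩ := h
  refine ⟨m, c, fun j => L (x j), hc, fun j => ⟨x j, hx j, rfl⟩, ?_⟩
  rw [← hsum, map_sum]
  simp [map_smul]

/-- Cooperative conical Carathéodory: if `v` lies in the cone of the union of
every `k` of the `d+k-1` sets `S_i ⊆ ℝ^d`, then `v` lies in the cone of some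
rainbow set. -/
theorem stmt_8 (d k : ℕ) (hk : 1 ≤ k) (v : Fin d → ℝ)
    (S : Fin (d + k - 1) → Set (Fin d → ℝ))
    (hK : ∀ K : Finset (Fin (d + k - 1)), K.card = k →
      InCone (⋃ i ∈ K, S i) v) :
    ∃ (m : ℕ) (g : Fin m ↪ Fin (d + k - 1)) (x : Fin m → (Fin d → ℝ)),
      (∀ j, x j ∈ S (g j)) ∧ InCone (Set.range x) v := by
  classical
  set e := WithLp.linearEquiv 2 ℝ (Fin d → ℝ) with he
  have hK' : ∀ K : Finset (Fin (d + k - 1)), K.card = k →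
      InCone (⋃ i ∈ K, (⇑e ⁻¹' (S i) : Set (EuclideanSpace ℝ (Fin d)))) (e.symm v) := by
    intro K hKc
    have h2 := InCone.map_linear (e.symm.toLinearMap) (hK K hKc)
    have h3 : ⇑(e.symm.toLinearMap) '' (⋃ i ∈ K, S i) = ⋃ i ∈ K, ⇑e ⁻¹' (S i) := by
      rw [show ⇑(e.symm.toLinearMap) = ⇑e.symm from rfl, Set.image_iUnion₂]
      apply Set.iUnion₂_congr
      intro i _
      ext p
      constructor
      · rintro ⟨a, ha, rfl⟩
        simpa using ha
      · intro hp
        exact ⟨e p, hp, e.symm_apply_apply p⟩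
    rwa [h3] at h2
  obtain ⟨m, g, x, hx, hic⟩ := main_cone (d := d) (k := k) (n := d + k - 1) hk rfl
      (finrank_euclideanSpace_fin) (e.symm v) (fun i => ⇑e ⁻¹' (S i)) hK'
  refine ⟨m, g, fun j => e (x j), fun j => hx j, ?_⟩
  have h2 := InCone.map_linear (e.toLinearMap) hic
  have h3 : ⇑(e.toLinearMap) '' Set.range x = Set.range fun j => e (x j) := by
    rw [← Set.range_comp]
    rfl
  rw [h3] at h2
  have h4 : e.toLinearMap (e.symm v) = v := e.apply_symm_apply v
  rwa [h4] at h2
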